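/- For every n ≥ 1, there is a unique minimal element in the dominance order restricted to the set of partitions of n into distinct parts, namely the partition with parts {1, 2, ..., ℓ} \ {k}, where ℓ is the smallest integer with ℓ(ℓ+1)/2 ≥ n and k = ℓ(ℓ+1)/2 − n (with the convention that if k = 0 the parts are exactly {1,...,ℓ}). -/

import Mathlib

def tri (n : ℕ) : ℕ := n * (n + 1) / 2

lemma tri_two (n : ℕ) : 2 * tri n = n * (n + 1) := by
  have h : 2 ∣ n * (n + 1) := (Nat.even_mul_succ_self n).two_dvd
  unfold tri; omega

lemma tri_succ (n : ℕ) : tri (n + 1) = tri n + (n + 1) := by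
  have h1 := tri_two n
  have h2 := tri_two (n + 1)
  have h3 : (n+1) * (n+1+1) = n*(n+1) + 2*(n+1) := by ring
  omega

lemma tri_mono {m n : ℕ} (h : m ≤ n) : tri m ≤ tri n :=
  Nat.div_le_div_right (Nat.mul_le_mul h (by omega))

lemma tri_add (a b : ℕ) : tri (a + b) = tri a + tri b + a * b := by
  induction b with
  | zero => simp [tri]
  | succ b ih =>
    have h1 := tri_succ (a + b)
    have h2 := tri_succ b
    have h3 : a * (b + 1) = a * b + a := by ring
    show tri (a + b + 1) = _
    omega

lemma sum_range'_shift (a : ℕ) : ∀ t : ℕ, (List.range' (a + 1) t).sum + tri a = tri (a + t) := by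
  intro t
  induction t with
  | zero => simp
  | succ t ih =>
    rw [List.range'_concat]
    have h1 := tri_succ (a + t)
    have h2 : a + (t + 1) = a + t + 1 := rfl
    rw [h2]
    simp only [List.sum_append, List.sum_cons, List.sum_nil]
    omega

lemma sum_range'_one (m : ℕ) : (List.range' 1 m).sum = tri m := by
  have := sum_range'_shift 0 m
  simpa [tri] using this

lemma take_range' (s m n : ℕ) (h : m ≤ n) :
    (List.range' s n).take m = List.range' s m := by
  have h1 : List.range' s m ++ List.range' (s + 1 * m) (n - m) = List.range' s ((n - m) + m) :=
    by rw [Nat.add_comm (n - m) m]; exact List.range'_append (s := s) (m := m) (n := n - m) (step := 1)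
  rw [show n = (n - m) + m by omega, ← h1, List.take_left' (List.length_range' (s := s) (step := 1) (n := m))]

/-- lower bound for sorted distinct lists with all entries > M -/
lemma sdp_lower (M : ℕ) : ∀ l : List ℕ, l.Pairwise (· > ·) → (∀ x ∈ l, M < x) →
    l.length * M + tri l.length ≤ l.sum ∧ (l = [] ∨ M + l.length ≤ l.headD 0) := by
  intro l
  induction l with
  | nil => simp [tri]
  | cons a t ih =>
    intro hs hp
    obtain ⟨ih1, ih2⟩ := ih hs.of_cons (fun x hx => hp x (List.mem_cons_of_mem _ hx))
    have haM : M < a := hp a (List.mem_cons_self)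
    have ha : M + t.length + 1 ≤ a := by
      rcases ih2 with h | h
      · subst h; simp only [List.length_nil]; omega
      · cases t with
        | nil => simp only [List.length_nil]; omega
        | cons b s =>
          have hab : a > b := List.rel_of_pairwise_cons hs (List.mem_cons_self)
          simp only [List.headD_cons] at h
          simp only [List.length_cons] at h ⊢
          omega
    constructor
    · have h1 := tri_succ t.length
      have h2 : (t.length + 1) * M = t.length * M + M := by ring
      simp only [List.sum_cons, List.length_cons]
      omega
    · right
      simp only [List.headD_cons, List.length_cons]
      omega

/-- upper bound: sum of a sorted distinct positive list is at most tri(head) -/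
lemma sdp_upper : ∀ l : List ℕ, l.Pairwise (· > ·) → (∀ x ∈ l, 0 < x) →
    l.sum ≤ tri (l.headD 0) := by
  intro l
  induction l with
  | nil => simp [tri]
  | cons a t ih =>
    intro hs hp
    have ha : 0 < a := hp a (List.mem_cons_self)
    have iht := ih hs.of_cons (fun x hx => hp x (List.mem_cons_of_mem _ hx))
    have hhd : t.headD 0 ≤ a - 1 := by
      cases t with
      | nil => simp only [List.headD_nil]; omega
      | cons b s =>
        have : a > b := List.rel_of_pairwise_cons hs (List.mem_cons_self)
        simp only [List.headD_cons]; omega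
    have h1 : tri (t.headD 0) ≤ tri (a - 1) := tri_mono hhd
    have h2 : tri (a - 1 + 1) = tri (a - 1) + (a - 1 + 1) := tri_succ (a - 1)
    have h3 : a - 1 + 1 = a := by omega
    rw [h3] at h2
    simp only [List.sum_cons, List.headD_cons]
    omega

lemma eq_of_prefix_sums : ∀ (l m : List ℕ), (∀ x ∈ l, 0 < x) → (∀ x ∈ m, 0 < x) →
    (∀ j, (l.take j).sum = (m.take j).sum) → l = m := by
  intro l
  induction l with
  | nil =>
    intro m _ hm h
    cases m with
    | nil => rfl
    | cons b s =>
      have := h 1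
      have hb := hm b (List.mem_cons_self)
      simp [List.take_succ_cons] at this
      omega
  | cons a t ih =>
    intro m hl hm h
    cases m with
    | nil =>
      have := h 1
      have hb := hl a (List.mem_cons_self)
      simp [List.take_succ_cons] at this
      omega
    | cons b s =>
      have hab : a = b := by have := h 1; simpa using this
      have ht : t = s := by
        apply ih s (fun x hx => hl x (List.mem_cons_of_mem _ hx))
          (fun x hx => hm x (List.mem_cons_of_mem _ hx))
        intro j
        have := h (j + 1)
        simp only [List.take_succ_cons, List.sum_cons] at this
        omega
      rw [hab, ht]

/-- A partition of `n` into distinct parts: a strictly decreasing list of positive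
integers summing to `n`. -/
def IsDistinctPartition (n : ℕ) (l : List ℕ) : Prop :=
  l.Pairwise (· > ·) ∧ (∀ x ∈ l, 0 < x) ∧ l.sum = n

/-- `μ` is dominated by `l`: every partial sum of `μ` is at most that of `l`. -/
def Dominated (l μ : List ℕ) : Prop :=
  ∀ k : ℕ, (μ.take k).sum ≤ (l.take k).sum

/-- For `n ≥ 1`, the dominance order on partitions of `n` into distinct parts has
a unique minimal element, namely the partition with parts `{1, …, ℓ} \ {k}` where
`ℓ` is least with `ℓ(ℓ+1)/2 ≥ n` and `k = ℓ(ℓ+1)/2 − n`. -/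
theorem unique_minimal_distinct_partition (n : ℕ) (hn : 1 ≤ n)
    (ℓ : ℕ) (hℓ : n ≤ ℓ * (ℓ + 1) / 2) (hℓmin : ∀ m : ℕ, m < ℓ → m * (m + 1) / 2 < n)
    (k : ℕ) (hk : k = ℓ * (ℓ + 1) / 2 - n)
    (L : List ℕ) (hL : L = ((List.range' 1 ℓ).filter (fun j => j ≠ k)).reverse) :
    IsDistinctPartition n L ∧
      (∀ μ : List ℕ, IsDistinctPartition n μ → Dominated μ L) ∧
      (∀ μ : List ℕ, IsDistinctPartition n μ → Dominated L μ → μ = L) := by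
  have htl : n ≤ tri ℓ := hℓ
  have hkt : k = tri ℓ - n := hk
  have htri0 : tri 0 = 0 := rfl
  have hl1 : 1 ≤ ℓ := by
    rcases Nat.eq_zero_or_pos ℓ with h | h
    · subst h; omega
    · exact h
  have htl' : tri (ℓ - 1) < n := hℓmin (ℓ - 1) (by omega)
  have hts : tri ℓ = tri (ℓ - 1) + ℓ := by
    have := tri_succ (ℓ - 1)
    rw [show ℓ - 1 + 1 = ℓ by omega] at this
    omega
  have hkl : k < ℓ := by omega
  have hkn : n + k = tri ℓ := by omega
  set A : List ℕ := (List.range' 1 ℓ).filter (fun j => j ≠ k) with hAdef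
  have hApair : A.Pairwise (· < ·) :=
    List.Pairwise.sublist List.filter_sublist (List.pairwise_lt_range' (s := 1) (n := ℓ))
  have hApos : ∀ x ∈ A, 0 < x := by
    intro x hx
    have := List.mem_range'_1.mp (List.mem_of_mem_filter hx)
    omega
  have hAeq0 : k = 0 → A = List.range' 1 ℓ := by
    intro h
    rw [hAdef]
    apply List.filter_eq_self.mpr
    intro a ha
    have := List.mem_range'_1.mp ha
    simp only [ne_eq, decide_eq_true_eq]
    omega
  have hAeq1 : 1 ≤ k → A = List.range' 1 (k - 1) ++ List.range' (k + 1) (ℓ - k) := by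
    intro h1
    have hsplit : List.range' 1 ℓ =
        List.range' 1 (k - 1) ++ [k] ++ List.range' (k + 1) (ℓ - k) := by
      have e1 : List.range' 1 (k - 1) ++ List.range' (1 + 1 * (k - 1)) (ℓ - (k - 1)) =
          List.range' 1 ((ℓ - (k - 1)) + (k - 1)) := by rw [Nat.add_comm (ℓ - (k - 1)) (k - 1)]; exact List.range'_append (s := 1) (m := k - 1) (n := ℓ - (k - 1)) (step := 1)
      have e2 : List.range' k 1 ++ List.range' (k + 1 * 1) (ℓ - k) =
          List.range' k ((ℓ - k) + 1) := by rw [Nat.add_comm (ℓ - k) 1]; exact List.range'_append (s := k) (m := 1) (n := ℓ - k) (step := 1)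
      rw [show (ℓ - (k - 1)) + (k - 1) = ℓ by omega, show 1 + 1 * (k - 1) = k by omega] at e1
      rw [show k + 1 * 1 = k + 1 by omega, show (ℓ - k) + 1 = ℓ - (k - 1) by omega] at e2
      rw [← e1, ← e2, List.range'_one, List.append_assoc]
    have f1 : (List.range' 1 (k - 1)).filter (fun j => j ≠ k) = List.range' 1 (k - 1) := by
      apply List.filter_eq_self.mpr
      intro a ha
      have := List.mem_range'_1.mp ha
      simp only [ne_eq, decide_eq_true_eq]
      omega
    have f2 : (List.range' (k + 1) (ℓ - k)).filter (fun j => j ≠ k) =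
        List.range' (k + 1) (ℓ - k) := by
      apply List.filter_eq_self.mpr
      intro a ha
      have := List.mem_range'_1.mp ha
      simp only [ne_eq, decide_eq_true_eq]
      omega
    have f3 : [k].filter (fun j => j ≠ k) = [] := by simp
    rw [hAdef, hsplit, List.filter_append, List.filter_append, f1, f2, f3, List.append_nil]
  have hAlen : A.length + (if k = 0 then 0 else 1) = ℓ := by
    rcases Nat.eq_zero_or_pos k with h | h
    · rw [hAeq0 h, if_pos h, List.length_range']; omega
    · rw [hAeq1 h, if_neg (by omega), List.length_append, List.length_range', List.length_range']
      omega
  have hAtake : ∀ t, t ≤ A.length →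
      (A.take t).sum = if 1 ≤ k ∧ k ≤ t then tri (t + 1) - k else tri t := by
    intro t ht
    rcases Nat.eq_zero_or_pos k with h | h
    · have hAl : A.length = ℓ := by
        have tmp := hAlen; rw [if_pos h] at tmp; omega
      rw [if_neg (by omega), hAeq0 h, take_range' 1 t ℓ (by omega), sum_range'_one]
    · have hAl : A.length + 1 = ℓ := by
        have tmp := hAlen; rw [if_neg (by omega)] at tmp; omega
      rcases le_or_gt t (k - 1) with h2 | h2
      · rw [if_neg (by omega), hAeq1 h,
          List.take_append_of_le_length (by rw [List.length_range']; omega),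
          take_range' 1 t (k - 1) h2, sum_range'_one]
      · rw [if_pos ⟨h, by omega⟩, hAeq1 h]
        have hlen1 : (List.range' 1 (k - 1)).length = k - 1 := List.length_range' (s := 1) (step := 1) (n := k - 1)
        have e : t = (List.range' 1 (k - 1)).length + (t - (k - 1)) := by rw [hlen1]; omega
        conv_lhs => rw [e]
        rw [List.take_append, List.take_of_length_le (by omega), Nat.add_sub_cancel_left, take_range' (k + 1) (t - (k - 1)) (ℓ - k) (by omega),
          List.sum_append, sum_range'_one]
        have hsr := sum_range'_shift k (t - (k - 1))
        rw [show k + (t - (k - 1)) = t + 1 by omega] at hsr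
        have h4 : tri k = tri (k - 1) + k := by
          have := tri_succ (k - 1)
          rw [show k - 1 + 1 = k by omega] at this
          omega
        omega
  have hAsum : A.sum = n := by
    have hA := hAtake A.length le_rfl
    rw [List.take_of_length_le le_rfl] at hA
    rcases Nat.eq_zero_or_pos k with h | h
    · have hAl : A.length = ℓ := by
        have tmp := hAlen; rw [if_pos h] at tmp; omega
      rw [if_neg (by omega), hAl] at hA
      omega
    · have hAl : A.length + 1 = ℓ := by
        have tmp := hAlen; rw [if_neg (by omega)] at tmp; omega
      rw [if_pos ⟨h, by omega⟩, hAl] at hA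
      omega
  have hLsort : L.Pairwise (· > ·) := by
    rw [hL]
    exact List.pairwise_reverse.mpr hApair
  have hLpos : ∀ x ∈ L, 0 < x := by
    intro x hx
    rw [hL, List.mem_reverse] at hx
    exact hApos x hx
  have hLsum : L.sum = n := by rw [hL, List.sum_reverse]; exact hAsum
  have hmin : ∀ μ : List ℕ, IsDistinctPartition n μ → Dominated μ L := by
    rintro μ ⟨hs, hp, hsum⟩ j
    have hμlow := (sdp_lower 0 μ hs (fun x hx => hp x hx)).1
    have htriμ : tri μ.length ≤ n := by
      rw [Nat.mul_zero, Nat.zero_add, hsum] at hμlow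
      exact hμlow
    have hmlen : μ.length ≤ A.length := by
      by_contra hcon
      push_neg at hcon
      rcases Nat.eq_zero_or_pos k with h | h
      · have hAl : A.length = ℓ := by
          have tmp := hAlen; rw [if_pos h] at tmp; omega
        have h1 : tri (ℓ + 1) ≤ tri μ.length := tri_mono (by omega)
        have h2 := tri_succ ℓ
        omega
      · have hAl : A.length + 1 = ℓ := by
          have tmp := hAlen; rw [if_neg (by omega)] at tmp; omega
        have h1 : tri ℓ ≤ tri μ.length := tri_mono (by omega)
        omega
    rcases le_or_gt μ.length j with hj | hj
    · rw [List.take_of_length_le hj, hsum]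
      have := List.sum_take_add_sum_drop L j
      omega
    · have hjA : j < A.length := by omega
      have hdpos : 0 < (μ.drop j).length := by rw [List.length_drop]; omega
      obtain ⟨M, rest, hDeq⟩ : ∃ M rest, μ.drop j = M :: rest := by
        cases hd : μ.drop j with
        | nil => rw [hd] at hdpos; simp at hdpos
        | cons x xs => exact ⟨x, xs, rfl⟩
      have hDsorted : (μ.drop j).Pairwise (· > ·) :=
        List.Pairwise.sublist (List.drop_sublist j μ) hs
      have hDpos : ∀ x ∈ μ.drop j, 0 < x := fun x hx => hp x (List.mem_of_mem_drop hx)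
      have hMpos : 0 < M := hDpos M (by rw [hDeq]; exact List.mem_cons_self)
      have hTub : (μ.drop j).sum ≤ tri M := by
        have h1 := sdp_upper (μ.drop j) hDsorted hDpos
        have hhd : (μ.drop j).headD 0 = M := by rw [hDeq]; rfl
        rwa [hhd] at h1
      have hcross : ∀ x ∈ μ.take j, M < x := by
        have hpa : (μ.take j ++ μ.drop j).Pairwise (· > ·) := by
          rw [List.take_append_drop]; exact hs
        have h2 := (List.pairwise_append.mp hpa).2.2
        intro x hx
        exact h2 x hx M (by rw [hDeq]; exact List.mem_cons_self)
      have htlen : (μ.take j).length = j := by rw [List.length_take]; omega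
      have hPlb : j * M + tri j ≤ (μ.take j).sum := by
        have h1 := (sdp_lower M (μ.take j)
          (List.Pairwise.sublist (List.take_sublist j μ) hs) hcross).1
        rwa [htlen] at h1
      have hPT : (μ.take j).sum + (μ.drop j).sum = n := by
        rw [List.sum_take_add_sum_drop]; exact hsum
      have hLsplit : (L.take j).sum + (A.take (A.length - j)).sum = n := by
        have h1 := List.sum_take_add_sum_drop L j
        have h2 : L.drop j = (A.take (A.length - j)).reverse := by
          rw [hL, List.reverse_take, Nat.sub_sub_self (le_of_lt hjA)]
        rw [h2, List.sum_reverse, hLsum] at h1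
        exact h1
      have hTLval := hAtake (A.length - j) (by omega)
      have key : (μ.drop j).sum ≤ (A.take (A.length - j)).sum := by
        rcases Nat.eq_zero_or_pos k with h | h
        · have hAl : A.length = ℓ := by
            have tmp := hAlen; rw [if_pos h] at tmp; omega
          rw [hTLval, if_neg (by omega), hAl]
          rcases le_or_gt M (ℓ - j) with hM | hM
          · exact le_trans hTub (tri_mono hM)
          · have hmul : j * (ℓ - j + 1) ≤ j * M := Nat.mul_le_mul le_rfl (by omega)
            have hid : tri ℓ = tri j + tri (ℓ - j) + j * (ℓ - j) := by
              have h3 := tri_add j (ℓ - j)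
              rw [show j + (ℓ - j) = ℓ by omega] at h3
              exact h3
            have hr : j * (ℓ - j + 1) = j * (ℓ - j) + j := by ring
            omega
        · have hAl : A.length + 1 = ℓ := by
            have tmp := hAlen; rw [if_neg (by omega)] at tmp; omega
          have ht1 : A.length - j + 1 = ℓ - j := by omega
          have hid : tri ℓ = tri j + tri (ℓ - j) + j * (ℓ - j) := by
            have h3 := tri_add j (ℓ - j)
            rw [show j + (ℓ - j) = ℓ by omega] at h3
            exact h3
          have hsucc : tri (ℓ - j) = tri (ℓ - j - 1) + (ℓ - j) := by
            have h3 := tri_succ (ℓ - j - 1)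
            rw [show ℓ - j - 1 + 1 = ℓ - j by omega] at h3
            omega
          rw [hTLval]
          rcases le_or_gt k (A.length - j) with hc | hc
          · rw [if_pos ⟨h, hc⟩, ht1]
            rcases le_or_gt M (ℓ - j - 1) with hM | hM
            · have h4 := le_trans hTub (tri_mono hM)
              omega
            · have hmul : j * (ℓ - j) ≤ j * M := Nat.mul_le_mul le_rfl (by omega)
              omega
          · rw [if_neg (by omega), show A.length - j = ℓ - j - 1 by omega]
            rcases le_or_gt M (ℓ - j - 1) with hM | hM
            · exact le_trans hTub (tri_mono hM)
            · have hmul : j * (ℓ - j) ≤ j * M := Nat.mul_le_mul le_rfl (by omega)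
              omega
      omega
  refine ⟨⟨hLsort, hLpos, hLsum⟩, hmin, ?_⟩
  intro μ hμ hdom
  exact eq_of_prefix_sums μ L hμ.2.1 hLpos (fun j => le_antisymm (hdom j) (hmin μ hμ j))
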